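/- Let φ : Ω × [0,∞) → [0,∞) be a weak Φ-function. If there exist c > 1 and t₀ > 0 such that 2c·φ(x,t) ≤ φ(x, ct) for all t ≥ t₀ and a.e. x ∈ Ω, then φ satisfies (aInc)_p on Ω × [t₀,∞) for p = log(2)/log(c) + 1 > 1 with constant c^p. -/
import Mathlib


open MeasureTheory Filter

/-- A weak Φ-function on Ω. -/
def IsWeakPhi {α : Type*} (φ : α → ℝ → ℝ) : Prop :=
  (∀ x, MonotoneOn (φ x) (Set.Ici 0)) ∧
  (∀ x, φ x 0 = 0) ∧
  (∀ x, Tendsto (φ x) (nhdsWithin 0 (Set.Ioi 0)) (nhds 0)) ∧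
  (∀ x, Tendsto (φ x) atTop atTop) ∧
  (∃ L : ℝ, 1 ≤ L ∧ ∀ x, ∀ s t : ℝ, 0 < s → s < t → φ x s / s ≤ L * (φ x t / t))

/-- If 2c·φ(x,t) ≤ φ(x,ct) for all t ≥ t₀ and a.e. x, with c > 1 and t₀ > 0,
then φ satisfies (aInc)_p on Ω × [t₀,∞) for p = log 2 / log c + 1 > 1 with constant c^p. -/
theorem stmt_2 {n : ℕ} (φ : EuclideanSpace ℝ (Fin n) → ℝ → ℝ)
    (hφ : IsWeakPhi φ) (c t₀ : ℝ) (hc : 1 < c) (ht₀ : 0 < t₀)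
    (hdbl : ∀ᵐ x ∂volume, ∀ t : ℝ, t₀ ≤ t → 2 * c * φ x t ≤ φ x (c * t)) :
    1 < Real.log 2 / Real.log c + 1 ∧
    ∀ᵐ x ∂volume, ∀ t s : ℝ, t₀ ≤ t → t < s →
      φ x t / t ^ (Real.log 2 / Real.log c + 1) ≤
        c ^ (Real.log 2 / Real.log c + 1) *
          (φ x s / s ^ (Real.log 2 / Real.log c + 1)) := by
  have hc0 : (0:ℝ) < c := lt_trans one_pos hc
  have hc1 : c ≠ 1 := ne_of_gt hc
  have hlogc : 0 < Real.log c := Real.log_pos hc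
  set p : ℝ := Real.log 2 / Real.log c + 1 with hp
  have hp1 : 1 < p := by
    have : 0 < Real.log 2 / Real.log c :=
      div_pos (Real.log_pos one_lt_two) hlogc
    simpa [hp] using this
  have hp0 : 0 < p := lt_trans one_pos hp1
  -- key: c ^ p = 2 * c
  have hcp : c ^ p = 2 * c := by
    have h2 : c ^ (Real.log 2 / Real.log c) = 2 := by
      rw [← Real.logb, Real.rpow_logb hc0 hc1 two_pos]
    rw [hp, Real.rpow_add hc0, h2, Real.rpow_one]
  refine ⟨hp1, ?_⟩
  filter_upwards [hdbl] with x hx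
  intro t s ht hts
  have ht0 : 0 < t := lt_of_lt_of_le ht₀ ht
  have hs0 : 0 < s := lt_trans ht0 hts
  have hmono := hφ.1 x
  have hnn : ∀ u : ℝ, 0 ≤ u → 0 ≤ φ x u := by
    intro u hu
    have := hmono (Set.mem_Ici.2 le_rfl) (Set.mem_Ici.2 hu) hu
    rwa [hφ.2.1 x] at this
  -- iteration of the doubling condition
  have iter : ∀ k : ℕ, (2 * c) ^ k * φ x t ≤ φ x (c ^ k * t) := by
    intro k
    induction k with
    | zero => simp
    | succ k ih =>
      have hck1 : (1:ℝ) ≤ c ^ k := one_le_pow₀ (le_of_lt hc)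
      have hckt : t₀ ≤ c ^ k * t := le_trans ht (le_mul_of_one_le_left (le_of_lt ht0) hck1)
      have hstep := hx (c ^ k * t) hckt
      have h2c : (0:ℝ) < 2 * c := by linarith
      calc (2 * c) ^ (k + 1) * φ x t = (2 * c) * ((2 * c) ^ k * φ x t) := by ring
        _ ≤ (2 * c) * φ x (c ^ k * t) := by
            exact mul_le_mul_of_nonneg_left ih (le_of_lt h2c)
        _ ≤ φ x (c * (c ^ k * t)) := hstep
        _ = φ x (c ^ (k + 1) * t) := by ring_nf
  -- choose k with c^k * t ≤ s < c^(k+1) * t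
  set k : ℕ := ⌊Real.logb c (s / t)⌋₊ with hk
  have hst1 : 1 < s / t := (one_lt_div ht0).2 hts
  have hlogb0 : 0 ≤ Real.logb c (s / t) := by
    apply div_nonneg (Real.log_nonneg (le_of_lt hst1)) (le_of_lt hlogc)
  have hckle : c ^ k * t ≤ s := by
    have h1 : (k : ℝ) ≤ Real.logb c (s / t) := Nat.floor_le hlogb0
    have h2 : c ^ (k:ℝ) ≤ c ^ (Real.logb c (s / t)) :=
      Real.rpow_le_rpow_left_iff hc |>.2 h1
    rw [Real.rpow_logb hc0 hc1 (lt_trans one_pos hst1), Real.rpow_natCast] at h2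
    exact (le_div_iff₀ ht0).1 h2
  have hsle : s ≤ c ^ (k + 1) * t := by
    have h1 : Real.logb c (s / t) < (k:ℝ) + 1 := Nat.lt_floor_add_one _
    have h2 : c ^ (Real.logb c (s / t)) ≤ c ^ ((k:ℝ) + 1) :=
      Real.rpow_le_rpow_left_iff hc |>.2 (le_of_lt h1)
    rw [Real.rpow_logb hc0 hc1 (lt_trans one_pos hst1)] at h2
    have : c ^ ((k:ℝ) + 1) = c ^ (k + 1) := by
      rw [show ((k:ℝ) + 1) = ((k + 1 : ℕ) : ℝ) by push_cast; ring, Real.rpow_natCast]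
    rw [this] at h2
    calc s = (s / t) * t := by field_simp
      _ ≤ c ^ (k + 1) * t := mul_le_mul_of_nonneg_right h2 (le_of_lt ht0)
  -- φ x s ≥ (2c)^k * φ x t
  have hφs : (2 * c) ^ k * φ x t ≤ φ x s := by
    refine le_trans (iter k) ?_
    apply hmono (Set.mem_Ici.2 ?_) (Set.mem_Ici.2 (le_of_lt hs0)) hckle
    positivity
  -- s^p ≤ c^p * (2c)^k * t^p
  have hsp : s ^ p ≤ c ^ p * ((2 * c) ^ k * t ^ p) := by
    have h1 : s ^ p ≤ (c ^ (k + 1) * t) ^ p :=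
      Real.rpow_le_rpow (le_of_lt hs0) hsle (le_of_lt hp0)
    have h2 : (c ^ (k + 1) * t) ^ p = (2 * c) ^ (k + 1) * t ^ p := by
      rw [Real.mul_rpow (by positivity) (le_of_lt ht0), ← Real.rpow_natCast c (k+1),
        ← Real.rpow_natCast (2*c) (k+1), ← Real.rpow_mul (le_of_lt hc0),
        mul_comm ((k+1:ℕ):ℝ) p, Real.rpow_mul (le_of_lt hc0), hcp]
    rw [h2] at h1
    calc s ^ p ≤ (2 * c) ^ (k + 1) * t ^ p := h1
      _ = c ^ p * ((2 * c) ^ k * t ^ p) := by rw [hcp]; ring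
  -- conclude
  have htp : (0:ℝ) < t ^ p := Real.rpow_pos_of_pos ht0 p
  have hsp0 : (0:ℝ) < s ^ p := Real.rpow_pos_of_pos hs0 p
  rw [mul_div_assoc', div_le_div_iff₀ htp hsp0]
  have hφt0 : 0 ≤ φ x t := hnn t (le_of_lt ht0)
  calc φ x t * s ^ p ≤ φ x t * (c ^ p * ((2 * c) ^ k * t ^ p)) :=
        mul_le_mul_of_nonneg_left hsp hφt0
    _ = c ^ p * ((2 * c) ^ k * φ x t) * t ^ p := by ring
    _ ≤ c ^ p * φ x s * t ^ p := by
        apply mul_le_mul_of_nonneg_right _ (le_of_lt htp)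
        exact mul_le_mul_of_nonneg_left hφs (by positivity)
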